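/- Theorem 1 (convergence of the HCISTA objective values and vanishing increments). Let (xⁿ, vⁿ, uⁿ, wⁿ) be an HCISTA trajectory with arbitrary uⁿ ∈ ℝ^N at each step. Then: (i) the sequence of objective values F_{λⁿ}(xⁿ) = (1/2)‖Axⁿ − b‖₂² + λⁿ‖xⁿ‖₁ is non-increasing in n and converges to a limit F* ≥ 0; (ii) Σ_{n=0}^{∞} ‖xⁿ⁺¹ − xⁿ‖₂² ≤ (4/‖A‖₂²)·(F_{λ⁰}(x⁰) − F*) < ∞; in particular (iii) ‖xⁿ⁺¹ − xⁿ‖₂ → 0 as n → ∞. -/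

import Mathlib

/-- The Euclidean (ℓ²) norm on `Fin n → ℝ`. -/
noncomputable def l2norm {n : ℕ} (x : Fin n → ℝ) : ℝ := Real.sqrt (∑ i, (x i) ^ 2)

/-- The ℓ¹ norm on `Fin n → ℝ`. -/
noncomputable def l1norm {n : ℕ} (x : Fin n → ℝ) : ℝ := ∑ i, |x i|

/-- The operator norm ‖A‖₂ of a matrix with respect to Euclidean norms. -/
noncomputable def opNorm {m n : ℕ} (A : Matrix (Fin m) (Fin n) ℝ) : ℝ :=
  sSup {c : ℝ | ∃ x : Fin n → ℝ, l2norm x ≤ 1 ∧ c = l2norm (A.mulVec x)}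

/-- Componentwise soft-thresholding: `S_θ(z)ᵢ = sgn(zᵢ) * max (|zᵢ| - θ) 0`. -/
noncomputable def soft {n : ℕ} (θ : ℝ) (z : Fin n → ℝ) : Fin n → ℝ :=
  fun i => Real.sign (z i) * max (|z i| - θ) 0

/-- Gradient of `f(x) = (1/2)‖Ax - b‖₂²`, namely `Aᵀ(Ax - b)`. -/
def gradf {m n : ℕ} (A : Matrix (Fin m) (Fin n) ℝ) (b : Fin m → ℝ) (x : Fin n → ℝ) :
    Fin n → ℝ :=
  A.transpose.mulVec (A.mulVec x - b)

/-- The Lasso objective `F_λ(x) = (1/2)‖Ax - b‖₂² + λ‖x‖₁`. -/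
noncomputable def Flasso {m n : ℕ} (A : Matrix (Fin m) (Fin n) ℝ) (b : Fin m → ℝ)
    (lam : ℝ) (x : Fin n → ℝ) : ℝ :=
  (1 / 2) * (l2norm (A.mulVec x - b)) ^ 2 + lam * l1norm x

/-- `s` is a subgradient of the convex function `φ` at the point `z`:
`φ(y) ≥ φ(z) + ⟨s, y - z⟩` for all `y`. -/
def IsSubgradient {n : ℕ} (φ : (Fin n → ℝ) → ℝ) (s z : Fin n → ℝ) : Prop :=
  ∀ y : Fin n → ℝ, φ z + ∑ i, s i * (y i - z i) ≤ φ y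

section basics
variable {n : ℕ}

lemma l2norm_nonneg (x : Fin n → ℝ) : 0 ≤ l2norm x := Real.sqrt_nonneg _

lemma sum_sq_nonneg (x : Fin n → ℝ) : 0 ≤ ∑ i, (x i) ^ 2 :=
  Finset.sum_nonneg fun i _ => sq_nonneg _

lemma l2norm_sq (x : Fin n → ℝ) : (l2norm x) ^ 2 = ∑ i, (x i) ^ 2 :=
  Real.sq_sqrt (sum_sq_nonneg x)

lemma l1norm_nonneg (x : Fin n → ℝ) : 0 ≤ l1norm x :=
  Finset.sum_nonneg fun i _ => abs_nonneg _

lemma l2norm_smul (c : ℝ) (x : Fin n → ℝ) : l2norm (c • x) = |c| * l2norm x := by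
  unfold l2norm
  have : ∑ i, ((c • x) i) ^ 2 = c ^ 2 * ∑ i, (x i) ^ 2 := by
    rw [Finset.mul_sum]; apply Finset.sum_congr rfl; intro i _
    simp [Pi.smul_apply, smul_eq_mul]; ring
  rw [this, Real.sqrt_mul (sq_nonneg c), Real.sqrt_sq_eq_abs]

lemma l2norm_pos {x : Fin n → ℝ} (hx : x ≠ 0) : 0 < l2norm x := by
  rcases Function.ne_iff.1 hx with ⟨i, hi⟩
  have hi' : x i ≠ 0 := hi
  have h1 : 0 < (x i) ^ 2 := by positivity
  have h2 : (x i) ^ 2 ≤ ∑ j, (x j) ^ 2 :=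
    Finset.single_le_sum (fun j _ => sq_nonneg (x j)) (Finset.mem_univ i)
  exact Real.sqrt_pos.2 (lt_of_lt_of_le h1 h2)

/-- per-coordinate subgradient inequality for soft thresholding -/
lemma soft_coord (θ z y : ℝ) (hθ : 0 ≤ θ) :
    θ * |Real.sign z * max (|z| - θ) 0| +
      (z - Real.sign z * max (|z| - θ) 0) * (y - Real.sign z * max (|z| - θ) 0) ≤ θ * |y| := by
  rcases le_or_gt (|z|) θ with h | h
  · have hm : max (|z| - θ) 0 = 0 := max_eq_right (by linarith)
    rw [hm]
    have h1 : z * y ≤ |z| * |y| := by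
      calc z * y ≤ |z * y| := le_abs_self _
      _ = |z| * |y| := abs_mul _ _
    have h2 : |z| * |y| ≤ θ * |y| := mul_le_mul_of_nonneg_right h (abs_nonneg y)
    simp only [mul_zero, abs_zero, sub_zero]
    nlinarith
  · have hm : max (|z| - θ) 0 = |z| - θ := max_eq_left (by linarith)
    rw [hm]
    rcases lt_trichotomy z 0 with hz | hz | hz
    · rw [Real.sign_of_neg hz, abs_of_neg hz]
      have hy1 : -|y| ≤ y := neg_abs_le y
      have habs : |(-1 : ℝ) * (-z - θ)| = -z - θ := by
        rw [abs_mul]; rw [abs_of_neg hz] at h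
        rw [abs_of_pos (by linarith : (0:ℝ) < -z - θ)]; simp
      rw [abs_of_neg hz] at *
      rw [habs]
      nlinarith [mul_le_mul_of_nonneg_left hy1 hθ]
    · exfalso; rw [hz] at h; simp at h; linarith
    · rw [Real.sign_of_pos hz, abs_of_pos hz]
      have hy1 : y ≤ |y| := le_abs_self y
      have habs : |(1 : ℝ) * (z - θ)| = z - θ := by
        rw [abs_of_pos hz] at h
        rw [one_mul, abs_of_pos (by linarith : (0:ℝ) < z - θ)]
      rw [abs_of_pos hz] at *
      rw [habs]
      nlinarith [mul_le_mul_of_nonneg_left hy1 hθ]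

/-- prox/subgradient inequality for the ℓ¹ soft-thresholding, summed form -/
lemma soft_prox (θ : ℝ) (hθ : 0 ≤ θ) (z y : Fin n → ℝ) :
    θ * l1norm (soft θ z) + ∑ i, (z i - soft θ z i) * (y i - soft θ z i) ≤ θ * l1norm y := by
  unfold l1norm soft
  rw [Finset.mul_sum, Finset.mul_sum, ← Finset.sum_add_distrib]
  exact Finset.sum_le_sum fun i _ => soft_coord θ (z i) (y i) hθ
end basics

section opnorm
variable {m n : ℕ} (A : Matrix (Fin m) (Fin n) ℝ)

lemma opNorm_bdd : BddAbove {c : ℝ | ∃ x : Fin n → ℝ, l2norm x ≤ 1 ∧ c = l2norm (A.mulVec x)} := by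
  use Real.sqrt (∑ i, ∑ j, (A i j) ^ 2)
  rintro c ⟨x, hx, rfl⟩
  unfold l2norm
  apply Real.sqrt_le_sqrt
  have hx2 : ∑ j, (x j) ^ 2 ≤ 1 := by
    have := l2norm_sq x
    nlinarith [l2norm_nonneg x]
  calc ∑ i, (A.mulVec x i) ^ 2
      ≤ ∑ i, (∑ j, (A i j) ^ 2) * ∑ j, (x j) ^ 2 := by
        apply Finset.sum_le_sum; intro i _
        have h := Finset.sum_mul_sq_le_sq_mul_sq Finset.univ (fun j => A i j) x
        simpa [Matrix.mulVec, dotProduct] using h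
    _ ≤ ∑ i, (∑ j, (A i j) ^ 2) * 1 := by
        apply Finset.sum_le_sum; intro i _
        exact mul_le_mul_of_nonneg_left hx2 (sum_sq_nonneg _)
    _ = ∑ i, ∑ j, (A i j) ^ 2 := by simp

lemma opNorm_mem {x : Fin n → ℝ} (hx : l2norm x ≤ 1) : l2norm (A.mulVec x) ≤ opNorm A :=
  le_csSup (opNorm_bdd A) ⟨x, hx, rfl⟩

lemma opNorm_nonneg : 0 ≤ opNorm A := by
  have h := opNorm_mem A (x := 0) (by unfold l2norm; simp)
  calc (0:ℝ) ≤ l2norm (A.mulVec 0) := l2norm_nonneg _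
    _ ≤ opNorm A := h

lemma l2norm_mulVec_le (x : Fin n → ℝ) : l2norm (A.mulVec x) ≤ opNorm A * l2norm x := by
  by_cases hx : x = 0
  · subst hx; rw [show A.mulVec 0 = 0 from by simp]
    unfold l2norm; simp
  · have hpos := l2norm_pos hx
    have h1 : l2norm ((l2norm x)⁻¹ • x) ≤ 1 := by
      rw [l2norm_smul, abs_of_pos (by positivity), inv_mul_cancel₀ (ne_of_gt hpos)]
    have h2 := opNorm_mem A h1
    rw [Matrix.mulVec_smul, l2norm_smul, abs_of_pos (by positivity)] at h2
    calc l2norm (A.mulVec x) = l2norm x * ((l2norm x)⁻¹ * l2norm (A.mulVec x)) := by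
          field_simp
      _ ≤ l2norm x * opNorm A := mul_le_mul_of_nonneg_left h2 (le_of_lt hpos)
      _ = opNorm A * l2norm x := mul_comm _ _

lemma opNorm_pos (hA : A ≠ 0) : 0 < opNorm A := by
  have : ∃ i j, A i j ≠ 0 := by
    by_contra h
    push_neg at h
    exact hA (by ext i j; simpa using h i j)
  obtain ⟨i, j, hij⟩ := this
  set e : Fin n → ℝ := Pi.single j 1 with he
  have he1 : l2norm e = 1 := by
    have hs : ∑ k, (e k) ^ 2 = 1 := by
      rw [he, Finset.sum_eq_single j]
      · simp
      · intro k _ hkj; simp [Pi.single_apply, hkj]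
      · intro h; exact absurd (Finset.mem_univ j) h
    unfold l2norm; rw [hs, Real.sqrt_one]
  have hAe : A.mulVec e = fun i => A i j := by
    funext i'
    rw [he]
    simp [Matrix.mulVec, dotProduct, Pi.single_apply]
  have h1 : |A i j| ≤ l2norm (A.mulVec e) := by
    rw [hAe]
    unfold l2norm
    rw [show |A i j| = Real.sqrt ((A i j) ^ 2) from (Real.sqrt_sq_eq_abs _).symm]
    apply Real.sqrt_le_sqrt
    exact Finset.single_le_sum (fun k _ => sq_nonneg (A k j)) (Finset.mem_univ i)
  have h2 := opNorm_mem A (le_of_eq he1)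
  have := abs_pos.2 hij
  linarith
end opnorm

section quad
variable {m n : ℕ} (A : Matrix (Fin m) (Fin n) ℝ) (b : Fin m → ℝ)

lemma transpose_inner (r : Fin m → ℝ) (d : Fin n → ℝ) :
    ∑ j, (A.transpose.mulVec r) j * d j = ∑ i, r i * (A.mulVec d) i := by
  simp only [Matrix.mulVec, dotProduct, Matrix.transpose_apply, Finset.sum_mul,
    Finset.mul_sum]
  rw [Finset.sum_comm]
  apply Finset.sum_congr rfl; intro i _
  apply Finset.sum_congr rfl; intro j _
  ring

lemma f_expand (x y : Fin n → ℝ) :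
    (1/2) * ∑ i, ((A.mulVec y - b) i) ^ 2
      = (1/2) * ∑ i, ((A.mulVec x - b) i) ^ 2
        + ∑ j, gradf A b x j * (y j - x j)
        + (1/2) * ∑ i, ((A.mulVec (y - x)) i) ^ 2 := by
  have h1 : ∑ j, gradf A b x j * (y j - x j)
      = ∑ i, (A.mulVec x - b) i * (A.mulVec (y - x)) i := by
    unfold gradf
    have h := transpose_inner A (A.mulVec x - b) (y - x)
    simpa [Pi.sub_apply] using h
  rw [h1, Matrix.mulVec_sub, Finset.mul_sum, Finset.mul_sum, Finset.mul_sum,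
    ← Finset.sum_add_distrib, ← Finset.sum_add_distrib]
  apply Finset.sum_congr rfl; intro i _
  simp only [Pi.sub_apply]
  ring

lemma mulVec_sq_le (d : Fin n → ℝ) :
    ∑ i, ((A.mulVec d) i) ^ 2 ≤ (opNorm A) ^ 2 * ∑ j, (d j) ^ 2 := by
  have h := l2norm_mulVec_le A d
  have h1 := l2norm_nonneg (A.mulVec d)
  have h2 := l2norm_nonneg d
  have h3 := l2norm_sq (A.mulVec d)
  have h4 := l2norm_sq d
  nlinarith

end quad

set_option maxHeartbeats 2000000 in
/-- One-step sufficient decrease for HCISTA. -/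
lemma step_descent {m n : ℕ} (A : Matrix (Fin m) (Fin n) ℝ) (hA : A ≠ 0) (b : Fin m → ℝ)
    (x u v w x' : Fin n → ℝ) (δ t lam α : ℝ)
    (hδ : 1/4 < δ ∧ δ < 1/2)
    (ht : 1 / (4 * δ * (opNorm A) ^ 2) ≤ t ∧ t ≤ 1 / (opNorm A) ^ 2)
    (hlam : 0 < lam)
    (hv : v = soft (lam * t) (x - t • gradf A b x))
    (hw : w = soft (lam * t) (u - t • gradf A b u))
    (hx' : x' = α • v + (1 - α) • w)
    (hα1 : v = x → α = 1)
    (hα2 : v ≠ x →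
      (l2norm (u - x)) ^ 2 /
        ((l2norm (u - x)) ^ 2 + (1 - 2 * t * δ * (opNorm A) ^ 2) * (l2norm (v - x)) ^ 2) ≤ α
        ∧ α < 1) :
    Flasso A b lam x' + ((opNorm A) ^ 2 / 4) * (l2norm (x' - x)) ^ 2 ≤ Flasso A b lam x := by
  set L2 : ℝ := (opNorm A) ^ 2 with hL2def
  have hL2 : 0 < L2 := by
    have := opNorm_pos A hA; positivity
  have hδ1 : 1/4 < δ := hδ.1
  have hδ2 : δ < 1/2 := hδ.2
  have hδ0 : 0 < δ := by linarith
  have htpos : 0 < t := lt_of_lt_of_le (by positivity) ht.1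
  have htL2 : t * L2 ≤ 1 := by
    have h := ht.2
    rw [le_div_iff₀ hL2] at h
    linarith
  have ht4 : 1 ≤ 4 * δ * L2 * t := by
    have h := ht.1
    rw [div_le_iff₀ (by positivity)] at h
    linarith
  by_cases hvx : v = x
  · have hα : α = 1 := hα1 hvx
    have hx'x : x' = x := by
      rw [hx', hα, hvx]; simp
    rw [hx'x]
    have hz : l2norm (x - x) = 0 := by
      have hxx : x - x = (0 : Fin n → ℝ) := by simp
      rw [hxx]; unfold l2norm; simp
    rw [hz]
    simp
  · obtain ⟨hlo, hhi⟩ := hα2 hvx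
    set Sv : ℝ := ∑ i, (v i - x i) ^ 2 with hSvdef
    set Sw : ℝ := ∑ i, (w i - x i) ^ 2 with hSwdef
    set Su : ℝ := ∑ i, (u i - x i) ^ 2 with hSudef
    set Swu : ℝ := ∑ i, (w i - u i) ^ 2 with hSwudef
    have hl2Sv : (l2norm (v - x)) ^ 2 = Sv := by
      rw [l2norm_sq, hSvdef]; apply Finset.sum_congr rfl; intros; simp
    have hl2Sw : (l2norm (w - x)) ^ 2 = Sw := by
      rw [l2norm_sq, hSwdef]; apply Finset.sum_congr rfl; intros; simp
    have hl2Su : (l2norm (u - x)) ^ 2 = Su := by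
      rw [l2norm_sq, hSudef]; apply Finset.sum_congr rfl; intros; simp
    have hSv0 : 0 ≤ Sv := by rw [hSvdef]; exact Finset.sum_nonneg fun i _ => sq_nonneg _
    have hSw0 : 0 ≤ Sw := by rw [hSwdef]; exact Finset.sum_nonneg fun i _ => sq_nonneg _
    have hSu0 : 0 ≤ Su := by rw [hSudef]; exact Finset.sum_nonneg fun i _ => sq_nonneg _
    have hSwu0 : 0 ≤ Swu := by rw [hSwudef]; exact Finset.sum_nonneg fun i _ => sq_nonneg _
    have hSvpos : 0 < Sv := by
      rw [← hl2Sv]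
      have := l2norm_pos (sub_ne_zero.2 hvx)
      positivity
    set τ : ℝ := 1 / (2 * t) with hτdef
    have hτpos : 0 < τ := by positivity
    have hτL : L2 / 2 ≤ τ := by
      rw [hτdef, le_div_iff₀ (by positivity)]
      linarith only [htL2]
    have hτδ : τ + δ * L2 - (3/4) * L2 ≥ 0 := by
      have hq : (1/4) * L2 ≤ δ * L2 :=
        mul_le_mul_of_nonneg_right (le_of_lt hδ1) (le_of_lt hL2)
      linarith only [hq, hτL]
    have h2tτ : 2 * t * τ = 1 := by
      rw [hτdef]; field_simp
    have hθ0 : 0 ≤ lam * t := by positivity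
    have hc0 : 0 < 1 - 2 * t * δ * L2 := by
      have hq : 2 * δ * (t * L2) ≤ 2 * δ * 1 :=
        mul_le_mul_of_nonneg_left htL2 (by linarith)
      have hq2 : 2 * δ * 1 < 1 := by linarith
      linarith only [hq, hq2]
    have hD : 0 < Su + (1 - 2 * t * δ * L2) * Sv := by
      have := mul_pos hc0 hSvpos
      linarith only [this, hSu0]
    rw [hl2Su, hl2Sv] at hlo
    have hα0 : 0 ≤ α := le_trans (div_nonneg hSu0 (le_of_lt hD)) hlo
    have hα1' : α ≤ 1 := le_of_lt hhi
    have hkey : (1 - α) * Su ≤ α * ((1 - 2 * t * δ * L2) * Sv) := by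
      rw [div_le_iff₀ hD] at hlo
      linarith only [hlo]
    have hkey' : (1 - α) * τ * Su ≤ α * (τ - δ * L2) * Sv := by
      have h := mul_le_mul_of_nonneg_left hkey (le_of_lt hτpos)
      have he : τ * (α * ((1 - 2 * t * δ * L2) * Sv)) = α * (τ - δ * L2) * Sv := by
        linear_combination (-(α * Sv * δ * L2)) * h2tτ
      linarith only [h, he]
    -- (I1) descent of the v-step
    have hfv : (1/2) * ∑ i, ((A.mulVec v - b) i) ^ 2
        ≤ (1/2) * ∑ i, ((A.mulVec x - b) i) ^ 2
          + (∑ j, gradf A b x j * (v j - x j)) + (L2/2) * Sv := by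
      have he := f_expand A b x v
      have hb := mulVec_sq_le A (v - x)
      have hb' : ∑ j, ((v - x) j) ^ 2 = Sv := by
        rw [hSvdef]; apply Finset.sum_congr rfl; intros; simp
      rw [hb', ← hL2def] at hb
      linarith only [he, hb]
    have hproxv : lam * l1norm v + (2 * τ) * Sv + (∑ j, gradf A b x j * (v j - x j))
        ≤ lam * l1norm x := by
      have hp := soft_prox (lam * t) hθ0 (x - t • gradf A b x) x
      rw [← hv] at hp
      have hsum : ∑ i, ((x - t • gradf A b x) i - v i) * (x i - v i)
          = Sv + t * (∑ j, gradf A b x j * (v j - x j)) := by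
        rw [hSvdef, Finset.mul_sum, ← Finset.sum_add_distrib]
        apply Finset.sum_congr rfl; intro i _
        simp only [Pi.sub_apply, Pi.smul_apply, smul_eq_mul]
        ring
      rw [hsum] at hp
      rw [← mul_le_mul_iff_right₀ htpos]
      calc t * (lam * l1norm v + (2 * τ) * Sv + (∑ j, gradf A b x j * (v j - x j)))
          = lam * t * l1norm v + ((2 * t * τ) * Sv + t * (∑ j, gradf A b x j * (v j - x j))) := by
            ring
        _ = lam * t * l1norm v + (Sv + t * (∑ j, gradf A b x j * (v j - x j))) := by
            rw [h2tτ]; ring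
        _ ≤ lam * t * l1norm x := hp
        _ = t * (lam * l1norm x) := by ring
    -- (I2) descent of the w-step relative to x
    have hfw : (1/2) * ∑ i, ((A.mulVec w - b) i) ^ 2
        ≤ (1/2) * ∑ i, ((A.mulVec x - b) i) ^ 2
          + (∑ j, gradf A b u j * (w j - x j)) + (L2/2) * Swu := by
      have he1 := f_expand A b u w
      have he2 := f_expand A b u x
      have hb := mulVec_sq_le A (w - u)
      have hb' : ∑ j, ((w - u) j) ^ 2 = Swu := by
        rw [hSwudef]; apply Finset.sum_congr rfl; intros; simp
      rw [hb', ← hL2def] at hb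
      have hnn := sum_sq_nonneg (A.mulVec (x - u))
      have hGsplit : (∑ j, gradf A b u j * (w j - u j)) - (∑ j, gradf A b u j * (x j - u j))
          = ∑ j, gradf A b u j * (w j - x j) := by
        rw [← Finset.sum_sub_distrib]
        apply Finset.sum_congr rfl; intro j _
        ring
      linarith only [he1, he2, hb, hnn, hGsplit]
    have hproxw : lam * l1norm w + τ * (Swu + Sw - Su) + (∑ j, gradf A b u j * (w j - x j))
        ≤ lam * l1norm x := by
      have hp := soft_prox (lam * t) hθ0 (u - t • gradf A b u) x
      rw [← hw] at hp
      have hsum : ∑ i, ((u - t • gradf A b u) i - w i) * (x i - w i)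
          = (1/2) * (Swu + Sw - Su) + t * (∑ j, gradf A b u j * (w j - x j)) := by
        have hSw' : Sw = ∑ i, (x i - w i) ^ 2 := by
          rw [hSwdef]; apply Finset.sum_congr rfl; intro i _; ring
        rw [hSwudef, hSw', hSudef]
        rw [Finset.mul_sum]
        rw [show (∑ i, (w i - u i) ^ 2) + (∑ i, (x i - w i) ^ 2) - (∑ i, (u i - x i) ^ 2)
            = ∑ i, ((w i - u i) ^ 2 + (x i - w i) ^ 2 - (u i - x i) ^ 2) from by
          rw [Finset.sum_sub_distrib, Finset.sum_add_distrib]]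
        rw [Finset.mul_sum, ← Finset.sum_add_distrib]
        apply Finset.sum_congr rfl; intro i _
        simp only [Pi.sub_apply, Pi.smul_apply, smul_eq_mul]
        ring
      rw [hsum] at hp
      rw [← mul_le_mul_iff_right₀ htpos]
      calc t * (lam * l1norm w + τ * (Swu + Sw - Su) + (∑ j, gradf A b u j * (w j - x j)))
          = lam * t * l1norm w + ((2 * t * τ) * ((1/2) * (Swu + Sw - Su))
              + t * (∑ j, gradf A b u j * (w j - x j))) := by ring
        _ = lam * t * l1norm w + ((1/2) * (Swu + Sw - Su)
              + t * (∑ j, gradf A b u j * (w j - x j))) := by rw [h2tτ]; ring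
        _ ≤ lam * t * l1norm x := hp
        _ = t * (lam * l1norm x) := by ring
    -- (I3) convexity of Flasso along the segment
    have hx'i : ∀ i, x' i = α * v i + (1 - α) * w i := by
      intro i; rw [hx']; simp [Pi.add_apply, Pi.smul_apply, smul_eq_mul]
    have hGzero : α * (∑ j, gradf A b x' j * (v j - x' j))
        + (1 - α) * (∑ j, gradf A b x' j * (w j - x' j)) = 0 := by
      rw [Finset.mul_sum, Finset.mul_sum, ← Finset.sum_add_distrib]
      apply Finset.sum_eq_zero; intro j _
      have h := hx'i j
      linear_combination (- (gradf A b x' j)) * h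
    have hfv' : (1/2) * ∑ i, ((A.mulVec x' - b) i) ^ 2 + (∑ j, gradf A b x' j * (v j - x' j))
        ≤ (1/2) * ∑ i, ((A.mulVec v - b) i) ^ 2 := by
      have he := f_expand A b x' v
      have hnn := sum_sq_nonneg (A.mulVec (v - x'))
      linarith only [he, hnn]
    have hfw' : (1/2) * ∑ i, ((A.mulVec x' - b) i) ^ 2 + (∑ j, gradf A b x' j * (w j - x' j))
        ≤ (1/2) * ∑ i, ((A.mulVec w - b) i) ^ 2 := by
      have he := f_expand A b x' w
      have hnn := sum_sq_nonneg (A.mulVec (w - x'))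
      linarith only [he, hnn]
    have hl1conv : l1norm x' ≤ α * l1norm v + (1 - α) * l1norm w := by
      unfold l1norm
      rw [Finset.mul_sum, Finset.mul_sum, ← Finset.sum_add_distrib]
      apply Finset.sum_le_sum; intro i _
      rw [hx'i i]
      calc |α * v i + (1 - α) * w i| ≤ |α * v i| + |(1 - α) * w i| := abs_add_le _ _
        _ = α * |v i| + (1 - α) * |w i| := by
            rw [abs_mul, abs_mul, abs_of_nonneg hα0,
              abs_of_nonneg (by linarith : (0:ℝ) ≤ 1 - α)]
    have hconv : Flasso A b lam x' ≤ α * Flasso A b lam v + (1 - α) * Flasso A b lam w := by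
      unfold Flasso
      rw [l2norm_sq, l2norm_sq, l2norm_sq]
      have h1 := mul_le_mul_of_nonneg_left hfv' hα0
      have h2 := mul_le_mul_of_nonneg_left hfw' (by linarith : (0:ℝ) ≤ 1 - α)
      have h3 := mul_le_mul_of_nonneg_left hl1conv (le_of_lt hlam)
      linarith only [h1, h2, h3, hGzero]
    -- (I4) convexity of the squared distance
    have hsq : (l2norm (x' - x)) ^ 2 ≤ α * Sv + (1 - α) * Sw := by
      rw [l2norm_sq, hSvdef, hSwdef, Finset.mul_sum, Finset.mul_sum, ← Finset.sum_add_distrib]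
      apply Finset.sum_le_sum; intro i _
      have hxi : x' i - x i = α * (v i - x i) + (1 - α) * (w i - x i) := by
        rw [hx'i i]; ring
      rw [Pi.sub_apply, hxi]
      have hint : 0 ≤ (α * (1 - α)) * (v i - x i - (w i - x i)) ^ 2 :=
        mul_nonneg (mul_nonneg hα0 (by linarith)) (sq_nonneg _)
      linarith only [hint]
    -- assemble
    have hFv : Flasso A b lam v ≤ Flasso A b lam x - (2 * τ - L2/2) * Sv := by
      unfold Flasso
      rw [l2norm_sq, l2norm_sq]
      linarith only [hfv, hproxv]
    have hFw : Flasso A b lam w ≤ Flasso A b lam x - τ * Sw + τ * Su := by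
      unfold Flasso
      rw [l2norm_sq, l2norm_sq]
      have hint : 0 ≤ (τ - L2/2) * Swu := mul_nonneg (by linarith) hSwu0
      linarith only [hfw, hproxw, hint]
    have P1 := mul_le_mul_of_nonneg_left hFv hα0
    have P2 := mul_le_mul_of_nonneg_left hFw (by linarith : (0:ℝ) ≤ 1 - α)
    have P3 := mul_le_mul_of_nonneg_left hsq (by positivity : (0:ℝ) ≤ L2/4)
    have Q5 : 0 ≤ (α * Sv) * (τ + δ * L2 - (3/4) * L2) :=
      mul_nonneg (mul_nonneg hα0 hSv0) hτδ
    have Q6 : 0 ≤ ((1 - α) * Sw) * (τ - L2/4) :=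
      mul_nonneg (mul_nonneg (by linarith) hSw0) (by linarith)
    linarith only [hconv, P1, P2, P3, hkey', Q5, Q6]

/-- Theorem 1: convergence of the HCISTA objective values and vanishing increments. -/
theorem hcista_theorem1 {M N : ℕ} (hM : 0 < M) (hN : 0 < N)
    (A : Matrix (Fin M) (Fin N) ℝ) (hA : A ≠ 0) (b : Fin M → ℝ)
    (x v u w : ℕ → Fin N → ℝ) (δ t lam α : ℕ → ℝ) (Clam : ℝ) (hClam : 0 < Clam)
    (hδ : ∀ n, 1 / 4 < δ n ∧ δ n < 1 / 2)
    (ht : ∀ n, 1 / (4 * δ n * (opNorm A) ^ 2) ≤ t n ∧ t n ≤ 1 / (opNorm A) ^ 2)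
    (hlam : ∀ n, 0 < lam n)
    (hv : ∀ n, v n = soft (lam n * t n) (x n - t n • gradf A b (x n)))
    (hw : ∀ n, w n = soft (lam n * t n) (u n - t n • gradf A b (u n)))
    (hxs : ∀ n, x (n + 1) = α n • v n + (1 - α n) • w n)
    (hα1 : ∀ n, v n = x n → α n = 1)
    (hα2 : ∀ n, v n ≠ x n →
      (l2norm (u n - x n)) ^ 2 /
        ((l2norm (u n - x n)) ^ 2
          + (1 - 2 * t n * δ n * (opNorm A) ^ 2) * (l2norm (v n - x n)) ^ 2) ≤ α n
        ∧ α n < 1)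
    (hlam' : ∀ n, lam (n + 1) ≤ min (lam n) (Clam * l2norm (x (n + 1) - x n))) :
    ∃ Fstar : ℝ, 0 ≤ Fstar ∧
      (∀ n, Flasso A b (lam (n + 1)) (x (n + 1)) ≤ Flasso A b (lam n) (x n)) ∧
      Filter.Tendsto (fun n => Flasso A b (lam n) (x n)) Filter.atTop (nhds Fstar) ∧
      Summable (fun n => (l2norm (x (n + 1) - x n)) ^ 2) ∧
      (∑' n : ℕ, (l2norm (x (n + 1) - x n)) ^ 2) ≤
        (4 / (opNorm A) ^ 2) * (Flasso A b (lam 0) (x 0) - Fstar) ∧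
      Filter.Tendsto (fun n => l2norm (x (n + 1) - x n)) Filter.atTop (nhds 0) := by
  have hL2 : (0:ℝ) < (opNorm A) ^ 2 := by
    have := opNorm_pos A hA; positivity
  have hstep : ∀ n, Flasso A b (lam n) (x (n+1))
      + ((opNorm A) ^ 2 / 4) * (l2norm (x (n+1) - x n)) ^ 2 ≤ Flasso A b (lam n) (x n) :=
    fun n => step_descent A hA b (x n) (u n) (v n) (w n) (x (n+1)) (δ n) (t n) (lam n) (α n)
      (hδ n) (ht n) (hlam n) (hv n) (hw n) (hxs n) (hα1 n) (hα2 n)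
  have hlamdec : ∀ n, lam (n+1) ≤ lam n := fun n => le_trans (hlam' n) (min_le_left _ _)
  have hdrop : ∀ n, Flasso A b (lam (n+1)) (x (n+1)) ≤ Flasso A b (lam n) (x (n+1)) := by
    intro n
    unfold Flasso
    have h := mul_le_mul_of_nonneg_right (hlamdec n) (l1norm_nonneg (x (n+1)))
    linarith
  have hmono : ∀ n, Flasso A b (lam (n+1)) (x (n+1)) ≤ Flasso A b (lam n) (x n) := by
    intro n
    have h2 := hstep n
    have h3 : 0 ≤ ((opNorm A) ^ 2 / 4) * (l2norm (x (n+1) - x n)) ^ 2 := by positivity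
    linarith [hdrop n]
  have hG0 : ∀ n, 0 ≤ Flasso A b (lam n) (x n) := by
    intro n
    unfold Flasso
    have h1 : 0 ≤ (l2norm (A.mulVec (x n) - b)) ^ 2 := sq_nonneg _
    have h2 := mul_nonneg (le_of_lt (hlam n)) (l1norm_nonneg (x n))
    linarith
  have hanti : Antitone (fun n => Flasso A b (lam n) (x n)) := antitone_nat_of_succ_le hmono
  have hbdd : BddBelow (Set.range (fun n => Flasso A b (lam n) (x n))) :=
    ⟨0, by rintro y ⟨n, rfl⟩; exact hG0 n⟩
  set Fstar : ℝ := ⨅ n, Flasso A b (lam n) (x n) with hFstardef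
  have hFle : ∀ n, Fstar ≤ Flasso A b (lam n) (x n) := fun n => ciInf_le hbdd n
  have hterm : ∀ n, ((opNorm A) ^ 2 / 4) * (l2norm (x (n+1) - x n)) ^ 2
      ≤ Flasso A b (lam n) (x n) - Flasso A b (lam (n+1)) (x (n+1)) := by
    intro n
    have h2 := hstep n
    linarith [hdrop n]
  have htele : ∀ K : ℕ, ∑ n ∈ Finset.range K,
      ((opNorm A) ^ 2 / 4) * (l2norm (x (n+1) - x n)) ^ 2
      ≤ Flasso A b (lam 0) (x 0) - Fstar := by
    intro K
    calc ∑ n ∈ Finset.range K, ((opNorm A) ^ 2 / 4) * (l2norm (x (n+1) - x n)) ^ 2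
        ≤ ∑ n ∈ Finset.range K,
            (Flasso A b (lam n) (x n) - Flasso A b (lam (n+1)) (x (n+1))) :=
          Finset.sum_le_sum fun n _ => hterm n
      _ = Flasso A b (lam 0) (x 0) - Flasso A b (lam K) (x K) :=
          Finset.sum_range_sub' (fun n => Flasso A b (lam n) (x n)) K
      _ ≤ Flasso A b (lam 0) (x 0) - Fstar := by
          have := hFle K; linarith
  have hbound : ∀ K : ℕ, ∑ n ∈ Finset.range K, (l2norm (x (n+1) - x n)) ^ 2
      ≤ (4 / (opNorm A) ^ 2) * (Flasso A b (lam 0) (x 0) - Fstar) := by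
    intro K
    have h := htele K
    rw [← Finset.mul_sum] at h
    have hq : (0:ℝ) < (opNorm A) ^ 2 / 4 := by positivity
    have h3 : (∑ n ∈ Finset.range K, (l2norm (x (n+1) - x n)) ^ 2)
        ≤ (Flasso A b (lam 0) (x 0) - Fstar) / ((opNorm A) ^ 2 / 4) :=
      (le_div_iff₀ hq).2 (by linarith)
    have h4 : (Flasso A b (lam 0) (x 0) - Fstar) / ((opNorm A) ^ 2 / 4)
        = (4 / (opNorm A) ^ 2) * (Flasso A b (lam 0) (x 0) - Fstar) := by
      field_simp
    rw [h4] at h3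
    exact h3
  have hsummable : Summable (fun n => (l2norm (x (n + 1) - x n)) ^ 2) :=
    summable_of_sum_range_le (fun n => sq_nonneg _) hbound
  refine ⟨Fstar, le_ciInf hG0, hmono, tendsto_atTop_ciInf hanti hbdd, hsummable,
    Summable.tsum_le_of_sum_range_le hsummable hbound, ?_⟩
  have ht2 := hsummable.tendsto_atTop_zero
  have heq : (fun n => l2norm (x (n + 1) - x n))
      = (fun n => Real.sqrt ((l2norm (x (n + 1) - x n)) ^ 2)) :=
    funext fun n => (Real.sqrt_sq (l2norm_nonneg _)).symm
  rw [heq]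
  have hc := (Real.continuous_sqrt.tendsto 0).comp ht2
  simpa [Real.sqrt_zero, Function.comp_def] using hc
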